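/- Let Ω ⊆ ℂⁿ be a connected open neighborhood of 0, let f = (f₁,…,f_d) and h = (h₁,…,h_m) be holomorphic mappings on Ω with f(0) = 0 and h(0) = 0, and let φ be a holomorphic function on Ω such that (1 + ‖z‖²)·(1 + Σ_{i=1}^d |fᵢ(z)|²) = (1 + Σ_{k=1}^m |hₖ(z)|²)·e^{φ(z) + conj(φ(z))} for all z ∈ Ω. Then φ(z) + conj(φ(z)) = 0 for all z ∈ Ω, and hence (1 + ‖z‖²)·(1 + Σ_{i=1}^d |fᵢ(z)|²) = 1 + Σ_{k=1}^m |hₖ(z)|² on Ω. -/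

import Mathlib

open scoped BigOperators

open Complex Filter Metric Set Topology

local notation "conj'" => starRingEnd ℂ

/-- Anti-holomorphic conjugation: if `g` is complex differentiable at `conj x`, then
`s ↦ conj (g (conj s))` is complex differentiable at `x`. -/
lemma hasDerivAt_conj_conj {g : ℂ → ℂ} {x c : ℂ}
    (hg : HasDerivAt g c (conj' x)) :
    HasDerivAt (fun s => conj' (g (conj' s))) (conj' c) x := by
  rw [hasDerivAt_iff_tendsto_slope] at hg ⊢
  have hconj : Tendsto (fun y : ℂ => conj' y) (𝓝[≠] x) (𝓝[≠] (conj' x)) := by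
    apply tendsto_nhdsWithin_of_tendsto_nhds_of_eventually_within
    · exact ((Complex.conjCLE.continuous.tendsto x)).mono_left nhdsWithin_le_nhds
    · filter_upwards [eventually_mem_nhdsWithin] with y hy
      simp only [Set.mem_compl_iff, Set.mem_singleton_iff] at hy ⊢
      exact fun hc => hy ((starRingEnd ℂ).injective hc)
  have h2 : Tendsto (fun y : ℂ => conj' (slope g (conj' x) (conj' y))) (𝓝[≠] x)
      (𝓝 (conj' c)) := (Complex.conjCLE.continuous.tendsto c).comp (hg.comp hconj)
  refine h2.congr fun y => ?_
  simp only [slope_def_field, map_div₀, map_sub, Complex.conj_conj]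

lemma differentiableAt_conj_conj {g : ℂ → ℂ} {x : ℂ}
    (hg : DifferentiableAt ℂ g (conj' x)) :
    DifferentiableAt ℂ (fun s => conj' (g (conj' s))) x :=
  (hasDerivAt_conj_conj hg.hasDerivAt).differentiableAt

/-- Polarization: a holomorphic function on a polydisc of radius `R > 1` that vanishes on the
anti-diagonal `(t, conj t)` vanishes at `(1, 0)`. -/
lemma polarization_zero {G : ℂ × ℂ → ℂ} {R : ℝ} (hR : 1 < R)
    (hG : DifferentiableOn ℂ G (ball (0:ℂ) R ×ˢ ball (0:ℂ) R))
    (hdiag : ∀ t : ℂ, ‖t‖ < R → G (t, conj' t) = 0) :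
    G (1, 0) = 0 := by
  have hR0 : (0:ℝ) < R := lt_trans one_pos hR
  have hpre : IsPreconnected (ball (0:ℂ) R) := (convex_ball (0:ℂ) R).isPreconnected
  -- Step 1: vanishing on all "rotated diagonals"
  have step1 : ∀ θ : ℂ, ‖θ‖ = 1 → ∀ w : ℂ, ‖w‖ < R → G (θ * w, conj' θ * w) = 0 := by
    intro θ hθ
    have hθ' : ‖conj' θ‖ = 1 := by rwa [RCLike.norm_conj]
    have hmaps : ∀ w ∈ ball (0:ℂ) R, (θ * w, conj' θ * w) ∈ ball (0:ℂ) R ×ˢ ball (0:ℂ) R := by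
      intro w hw
      rw [mem_ball_zero_iff] at hw
      constructor <;> simp only [mem_ball_zero_iff, norm_mul, hθ, hθ', one_mul] <;> exact hw
    have hg : DifferentiableOn ℂ (fun w : ℂ => G (θ * w, conj' θ * w)) (ball (0:ℂ) R) := by
      apply hG.comp
      · exact ((differentiable_id.const_mul θ).prodMk
          (differentiable_id.const_mul (conj' θ))).differentiableOn
      · exact hmaps
    have hga := hg.analyticOnNhd isOpen_ball
    have hfreq : ∃ᶠ z in 𝓝[≠] (0:ℂ), G (θ * z, conj' θ * z) = 0 := by
      have hseq : Tendsto (fun k : ℕ => (((1:ℝ)/(k+1) : ℝ) : ℂ)) atTop (𝓝[≠] (0:ℂ)) := by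
        apply tendsto_nhdsWithin_of_tendsto_nhds_of_eventually_within
        · have : Tendsto (fun k : ℕ => (1:ℝ)/(k+1)) atTop (𝓝 0) :=
            tendsto_one_div_add_atTop_nhds_zero_nat
          have h2 := (Complex.continuous_ofReal.tendsto 0).comp this
          rw [Function.comp_def] at h2
          simpa only [Complex.ofReal_zero] using h2
        · apply Filter.Eventually.of_forall
          intro k
          simp only [Set.mem_compl_iff, Set.mem_singleton_iff, Complex.ofReal_eq_zero]
          positivity
      apply hseq.frequently
      apply Filter.Frequently.of_forall
      intro k
      have hk : |(1:ℝ)/(k+1)| < R := by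
        rw [abs_of_pos (by positivity)]
        have : (1:ℝ)/(k+1) ≤ 1 := by
          rw [div_le_one (by positivity)]; linarith [Nat.cast_nonneg (α := ℝ) k]
        linarith
      have := hdiag (θ * (((1:ℝ)/(k+1) : ℝ) : ℂ)) (by
        rw [norm_mul, hθ, one_mul, Complex.norm_real]; exact hk)
      rwa [map_mul, Complex.conj_ofReal] at this
    have := hga.eqOn_zero_of_preconnected_of_frequently_eq_zero hpre
      (mem_ball_self hR0) hfreq
    intro w hw
    exact this (mem_ball_zero_iff.mpr hw)
  -- Step 2: vanishing on `{1} × unit circle`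
  have step2 : ∀ s : ℂ, ‖s‖ = 1 → G (1, s) = 0 := by
    intro s hs
    obtain ⟨w, hw⟩ := IsAlgClosed.exists_pow_nat_eq s (n := 2) two_pos
    have hw1 : ‖w‖ = 1 := by
      have : ‖w‖ ^ 2 = 1 := by rw [← norm_pow, hw, hs]
      nlinarith [norm_nonneg w]
    have h1 := step1 (conj' w) (by rwa [RCLike.norm_conj]) w (by rw [hw1]; exact hR)
    have e1 : conj' w * w = 1 := by
      rw [mul_comm, Complex.mul_conj]
      norm_cast
      rw [Complex.normSq_eq_norm_sq, hw1]; norm_num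
    have e2 : conj' (conj' w) * w = s := by rw [Complex.conj_conj, ← sq, hw]
    rwa [e1, e2] at h1
  -- Step 3: identity theorem in the second variable
  have hg1 : DifferentiableOn ℂ (fun s : ℂ => G (1, s)) (ball (0:ℂ) R) := by
    apply hG.comp
    · exact ((differentiable_const (1:ℂ)).prodMk differentiable_id).differentiableOn
    · intro s hs
      exact ⟨by rwa [mem_ball_zero_iff, norm_one], hs⟩
  have hga := hg1.analyticOnNhd isOpen_ball
  have hfreq : ∃ᶠ z in 𝓝[≠] (1:ℂ), G (1, z) = 0 := by
    have hseq : Tendsto (fun k : ℕ => Complex.exp (Complex.I * ((1:ℝ)/(k+1) : ℝ)))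
        atTop (𝓝[≠] (1:ℂ)) := by
      apply tendsto_nhdsWithin_of_tendsto_nhds_of_eventually_within
      · have h0 : Tendsto (fun k : ℕ => (1:ℝ)/(k+1)) atTop (𝓝 0) :=
          tendsto_one_div_add_atTop_nhds_zero_nat
        have : Tendsto (fun k : ℕ => Complex.I * ((1:ℝ)/(k+1) : ℝ)) atTop (𝓝 0) := by
          have := ((Complex.continuous_ofReal.tendsto 0).comp h0).const_mul Complex.I
          simpa using this
        have := (Complex.continuous_exp.tendsto 0).comp this
        simpa [Function.comp_def] using this
      · apply Filter.Eventually.of_forall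
        intro k
        simp only [Set.mem_compl_iff, Set.mem_singleton_iff]
        intro hc
        rw [Complex.exp_eq_one_iff] at hc
        obtain ⟨j, hj⟩ := hc
        have hj' : (((1:ℝ)/(k+1) : ℝ) : ℂ) * Complex.I
            = ((j * (2*Real.pi) : ℝ) : ℂ) * Complex.I := by
          push_cast at hj ⊢
          linear_combination hj
        have hx : (1:ℝ)/(k+1) = j * (2*Real.pi) := by
          have := mul_right_cancel₀ Complex.I_ne_zero hj'
          exact_mod_cast this
        have hpos : (0:ℝ) < 1/(k+1) := by positivity
        have hle : (1:ℝ)/(k+1) ≤ 1 := by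
          rw [div_le_one (by positivity)]; linarith [Nat.cast_nonneg (α := ℝ) k]
        rcases lt_trichotomy j 0 with hj0 | hj0 | hj0
        · have hj1 : (j:ℝ) ≤ -1 := by exact_mod_cast (by omega : j ≤ -1)
          nlinarith [Real.pi_pos]
        · rw [hj0] at hx; simp at hx; nlinarith
        · have hj1 : (1:ℝ) ≤ (j:ℝ) := by exact_mod_cast hj0
          nlinarith [Real.pi_gt_three]
    apply hseq.frequently
    apply Filter.Frequently.of_forall
    intro k
    apply step2
    rw [Complex.norm_exp]
    simp [Complex.mul_re]
  have := hga.eqOn_zero_of_preconnected_of_frequently_eq_zero hpre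
    (mem_ball_zero_iff.mpr (by rw [norm_one]; exact hR)) hfreq
  exact this (mem_ball_self hR0)

/-- Identity principle for holomorphic functions on a domain in a complex normed space,
for the special case of local constancy. -/
lemma eqOn_const_of_preconnected {E : Type*} [NormedAddCommGroup E] [NormedSpace ℂ E]
    {φ : E → ℂ} {U : Set E} (hUo : IsOpen U) (hUc : IsPreconnected U)
    (hφ : DifferentiableOn ℂ φ U) {z₀ : E} {c : ℂ} (h₀ : z₀ ∈ U)
    (hev : φ =ᶠ[𝓝 z₀] fun _ => c) : Set.EqOn φ (fun _ => c) U := by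
  have ball_prop : ∀ (y : E) (s : ℝ), ball y s ⊆ U → (φ =ᶠ[𝓝 y] fun _ => c) →
      ∀ w ∈ ball y s, φ w = c := by
    intro y s hsub hy w hw
    by_cases hwy : w = y
    · rw [hwy]; exact hy.eq_of_nhds
    have hd : 0 < ‖w - y‖ := by
      rw [norm_pos_iff]; exact sub_ne_zero_of_ne hwy
    set r := s / ‖w - y‖ with hr
    set L : ℂ → E := fun t => y + t • (w - y) with hL
    have hLd : Differentiable ℂ L := by
      apply (differentiable_id.smul_const (w - y)).const_add
    have hmaps : ∀ t : ℂ, t ∈ ball (0:ℂ) r → L t ∈ ball y s := by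
      intro t ht
      rw [mem_ball_zero_iff] at ht
      rw [mem_ball, dist_eq_norm]
      have h3 : y + t • (w - y) - y = t • (w - y) := by abel
      rw [hL]; simp only []
      rw [h3, norm_smul]
      calc ‖t‖ * ‖w - y‖ < r * ‖w - y‖ := by
            exact mul_lt_mul_of_pos_right ht hd
        _ = s := by rw [hr]; field_simp
    have hg : DifferentiableOn ℂ (fun t => φ (L t)) (ball (0:ℂ) r) :=
      hφ.comp hLd.differentiableOn fun t ht => hsub (hmaps t ht)
    have hga := hg.analyticOnNhd isOpen_ball
    have hs0 : 0 < s := pos_of_mem_ball hw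
    have hr0 : 0 < r := div_pos hs0 hd
    have hr1 : (1:ℂ) ∈ ball (0:ℂ) r := by
      rw [mem_ball_zero_iff, norm_one, hr, lt_div_iff₀ hd, one_mul]
      rw [mem_ball, dist_eq_norm] at hw
      exact hw
    have hev0 : (fun t => φ (L t)) =ᶠ[𝓝 (0:ℂ)] fun _ => c := by
      have hL0 : Tendsto L (𝓝 (0:ℂ)) (𝓝 y) := by
        have h4 : L 0 = y := by simp [hL]
        rw [← h4]
        exact hLd.continuous.tendsto 0
      exact hy.comp_tendsto hL0
    have := hga.eqOn_of_preconnected_of_eventuallyEq analyticOnNhd_const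
      (convex_ball (0:ℂ) r).isPreconnected (mem_ball_self hr0) hev0
    have h1 := this hr1
    simpa [hL] using h1
  let u := {x | φ =ᶠ[𝓝 x] fun _ => c}
  suffices main : closure u ∩ U ⊆ u by
    have Uu : U ⊆ u :=
      hUc.subset_of_closure_inter_subset isOpen_setOf_eventually_nhds ⟨z₀, h₀, hev⟩ main
    intro x hx
    exact (Uu hx).eq_of_nhds
  rintro x ⟨xu, xU⟩
  obtain ⟨s, hs0, hsub⟩ : ∃ s > 0, ball x s ⊆ U := Metric.isOpen_iff.1 hUo x xU
  obtain ⟨y, hyu, hxy⟩ : ∃ y ∈ u, dist x y < s/2 :=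
    Metric.mem_closure_iff.1 xu _ (half_pos hs0)
  have hby : ball y (s/2) ⊆ U := by
    refine subset_trans (ball_subset_ball' ?_) hsub
    rw [dist_comm] at hxy
    linarith
  have hball : ∀ w ∈ ball y (s/2), φ w = c := ball_prop y (s/2) hby hyu
  have hxball : ball y (s/2) ∈ 𝓝 x :=
    isOpen_ball.mem_nhds (by rwa [mem_ball])
  exact Filter.eventually_iff_exists_mem.mpr ⟨_, hxball, hball⟩

/-- Vanishing of the pluriharmonic factor in the proof of Theorem 1.1: if
`(1+‖z‖²)(1+Σᵢ|fᵢ(z)|²) = (1+Σₖ|hₖ(z)|²)·e^{φ(z)+conj(φ(z))}` on a connected open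
neighborhood `Ω` of `0` with `f(0)=0`, `h(0)=0` and `f`, `h`, `φ` holomorphic, then
`φ(z)+conj(φ(z)) ≡ 0` and hence `(1+‖z‖²)(1+Σᵢ|fᵢ(z)|²) = 1+Σₖ|hₖ(z)|²` on `Ω`. -/
theorem pluriharmonic_factor_vanishes
    (n d m : ℕ) (Ω : Set (Fin n → ℂ))
    (hΩo : IsOpen Ω) (hΩc : IsConnected Ω) (h0Ω : (0 : Fin n → ℂ) ∈ Ω)
    (f : Fin d → (Fin n → ℂ) → ℂ) (h : Fin m → (Fin n → ℂ) → ℂ)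
    (φ : (Fin n → ℂ) → ℂ)
    (hf : ∀ i, DifferentiableOn ℂ (f i) Ω)
    (hh : ∀ k, DifferentiableOn ℂ (h k) Ω)
    (hφ : DifferentiableOn ℂ φ Ω)
    (hf0 : ∀ i, f i 0 = 0) (hh0 : ∀ k, h k 0 = 0)
    (heq : ∀ z ∈ Ω,
      (((1 + ∑ j, ‖z j‖ ^ 2) * (1 + ∑ i, ‖f i z‖ ^ 2) : ℝ) : ℂ)
        = ((1 + ∑ k, ‖h k z‖ ^ 2 : ℝ) : ℂ)
            * Complex.exp (φ z + (starRingEnd ℂ) (φ z))) :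
    (∀ z ∈ Ω, φ z + (starRingEnd ℂ) (φ z) = 0) ∧
    (∀ z ∈ Ω,
      (1 + ∑ j, ‖z j‖ ^ 2) * (1 + ∑ i, ‖f i z‖ ^ 2) = 1 + ∑ k, ‖h k z‖ ^ 2) := by
  obtain ⟨ρ, hρ0, hballΩ⟩ : ∃ ρ > 0, ball (0 : Fin n → ℂ) ρ ⊆ Ω :=
    Metric.isOpen_iff.1 hΩo 0 h0Ω
  have hcast : ∀ a : ℂ, ((‖a‖ : ℝ) : ℂ)^2 = a * conj' a := by
    intro a
    rw [Complex.mul_conj]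
    norm_cast
    rw [Complex.normSq_eq_norm_sq]
  -- key step: on the small ball, `exp (φ z + conj (φ 0)) = 1`
  have hkey : ∀ z ∈ ball (0 : Fin n → ℂ) (ρ/2),
      Complex.exp (φ z + conj' (φ 0)) = 1 := by
    intro z hz
    have hz2 : ‖z‖ < ρ/2 := mem_ball_zero_iff.1 hz
    have hsm : ∀ t : ℂ, ‖t‖ < 2 → t • z ∈ Ω := by
      intro t ht
      apply hballΩ
      rw [mem_ball_zero_iff, norm_smul]
      nlinarith [norm_nonneg z, norm_nonneg t]
    set G : ℂ × ℂ → ℂ := fun p =>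
      (1 + p.1 * p.2 * ∑ j, z j * conj' (z j))
          * (1 + ∑ i, f i (p.1 • z) * conj' (f i (conj' p.2 • z)))
        - (1 + ∑ k, h k (p.1 • z) * conj' (h k (conj' p.2 • z)))
          * Complex.exp (φ (p.1 • z) + conj' (φ (conj' p.2 • z))) with hG
    have hmapsΩ : MapsTo (fun p : ℂ × ℂ => p.1 • z) (ball (0:ℂ) 2 ×ˢ ball (0:ℂ) 2) Ω :=
      fun p hp => hsm p.1 (mem_ball_zero_iff.1 hp.1)
    have key1 : ∀ (ψ : (Fin n → ℂ) → ℂ), DifferentiableOn ℂ ψ Ω →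
        DifferentiableOn ℂ (fun p : ℂ × ℂ => ψ (p.1 • z)) (ball (0:ℂ) 2 ×ˢ ball (0:ℂ) 2) :=
      fun ψ hψ => hψ.comp ((differentiable_fst.smul_const z).differentiableOn) hmapsΩ
    have key2 : ∀ (ψ : (Fin n → ℂ) → ℂ), DifferentiableOn ℂ ψ Ω →
        DifferentiableOn ℂ (fun p : ℂ × ℂ => conj' (ψ (conj' p.2 • z)))
          (ball (0:ℂ) 2 ×ˢ ball (0:ℂ) 2) := by
      intro ψ hψ
      have hg : DifferentiableOn ℂ (fun u : ℂ => ψ (u • z)) (ball (0:ℂ) 2) :=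
        hψ.comp ((differentiable_id.smul_const z).differentiableOn)
          (fun u hu => hsm u (mem_ball_zero_iff.1 hu))
      intro p hp
      have hp2 : conj' p.2 ∈ ball (0:ℂ) 2 := by
        rw [mem_ball_zero_iff, RCLike.norm_conj]
        exact mem_ball_zero_iff.1 hp.2
      have hgat : DifferentiableAt ℂ (fun u : ℂ => ψ (u • z)) (conj' p.2) :=
        hg.differentiableAt (isOpen_ball.mem_nhds hp2)
      have h1 : DifferentiableAt ℂ (fun s : ℂ => conj' (ψ (conj' s • z))) p.2 :=
        differentiableAt_conj_conj hgat
      exact (h1.comp p differentiableAt_snd).differentiableWithinAt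
    have hGdiff : DifferentiableOn ℂ G (ball (0:ℂ) 2 ×ˢ ball (0:ℂ) 2) := by
      rw [hG]
      apply DifferentiableOn.sub
      · apply DifferentiableOn.mul
        · exact ((differentiable_const 1).add
            ((differentiable_fst.mul differentiable_snd).mul_const _)).differentiableOn
        · exact (differentiableOn_const 1).add
            (DifferentiableOn.fun_sum fun i _ => (key1 (f i) (hf i)).mul (key2 (f i) (hf i)))
      · apply DifferentiableOn.mul
        · exact (differentiableOn_const 1).add
            (DifferentiableOn.fun_sum fun k _ => (key1 (h k) (hh k)).mul (key2 (h k) (hh k)))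
        · exact ((key1 φ hφ).add (key2 φ hφ)).cexp
    have hdiag : ∀ t : ℂ, ‖t‖ < 2 → G (t, conj' t) = 0 := by
      intro t ht
      have He := heq (t • z) (hsm t ht)
      push_cast at He
      simp only [hcast] at He
      have hsum : ∑ j, (t • z) j * conj' ((t • z) j)
          = t * conj' t * ∑ j, z j * conj' (z j) := by
        rw [Finset.mul_sum]
        apply Finset.sum_congr rfl
        intro j _
        simp only [Pi.smul_apply, smul_eq_mul, map_mul]
        ring
      rw [hG]
      simp only [Complex.conj_conj]
      rw [sub_eq_zero, ← hsum]
      exact He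
    have h10 := polarization_zero (by norm_num : (1:ℝ) < 2) hGdiff hdiag
    rw [hG] at h10
    simp only [one_smul, map_zero, zero_smul, hf0, hh0, mul_zero, zero_mul,
      Finset.sum_const_zero, add_zero, mul_one, one_mul] at h10
    rw [sub_eq_zero] at h10
    exact h10.symm
  have hre0 : φ 0 + conj' (φ 0) = 0 := by
    have h1 := hkey 0 (mem_ball_self (by positivity))
    rw [Complex.add_conj] at h1 ⊢
    rw [← Complex.ofReal_exp] at h1
    have h2 : Real.exp (2 * (φ 0).re) = 1 := by exact_mod_cast h1
    rw [Real.exp_eq_one_iff] at h2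
    rw [h2]
    norm_num
  -- `φ` is constant on the small ball
  have hBsub : ball (0 : Fin n → ℂ) (ρ/2) ⊆ Ω := fun x hx =>
    hballΩ (ball_subset_ball (by linarith) hx)
  have hconstball : ∀ x ∈ ball (0 : Fin n → ℂ) (ρ/2), φ x = φ 0 := by
    have hφB : DifferentiableOn ℂ φ (ball (0 : Fin n → ℂ) (ρ/2)) := hφ.mono hBsub
    have hfd : ∀ x ∈ ball (0 : Fin n → ℂ) (ρ/2),
        fderivWithin ℂ φ (ball (0 : Fin n → ℂ) (ρ/2)) x = 0 := by
      intro x hx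
      have hφx : DifferentiableAt ℂ φ x := hφ.differentiableAt (hΩo.mem_nhds (hBsub hx))
      have hE1 : HasFDerivAt (fun y => Complex.exp (φ y + conj' (φ 0)))
          (Complex.exp (φ x + conj' (φ 0)) • (fderiv ℂ φ x)) x :=
        (hφx.hasFDerivAt.add_const _).cexp
      have hEev : (fun y => Complex.exp (φ y + conj' (φ 0))) =ᶠ[𝓝 x] fun _ => (1:ℂ) :=
        Filter.eventually_iff_exists_mem.mpr ⟨_, isOpen_ball.mem_nhds hx, hkey⟩
      have hE0 : HasFDerivAt (fun y => Complex.exp (φ y + conj' (φ 0)))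
          (0 : (Fin n → ℂ) →L[ℂ] ℂ) x :=
        (hasFDerivAt_const (1:ℂ) x).congr_of_eventuallyEq hEev
      have h5 := hE1.unique hE0
      have h0 : fderiv ℂ φ x = 0 := by
        rcases (smul_eq_zero (M := (Fin n → ℂ) →L[ℂ] ℂ)).mp h5 with h6 | h6
        · exact absurd h6 (Complex.exp_ne_zero _)
        · exact h6
      rw [fderivWithin_of_isOpen isOpen_ball hx, h0]
    intro x hx
    exact (convex_ball _ _).is_const_of_fderivWithin_eq_zero hφB hfd hx
      (mem_ball_self (by positivity))
  have hevc : φ =ᶠ[𝓝 (0 : Fin n → ℂ)] fun _ => φ 0 :=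
    Filter.eventually_iff_exists_mem.mpr
      ⟨_, isOpen_ball.mem_nhds (mem_ball_self (by positivity)), hconstball⟩
  have hconstΩ : Set.EqOn φ (fun _ => φ 0) Ω :=
    eqOn_const_of_preconnected hΩo hΩc.isPreconnected hφ h0Ω hevc
  have hvan : ∀ z ∈ Ω, φ z + conj' (φ z) = 0 := by
    intro w hw
    rw [hconstΩ hw]
    exact hre0
  refine ⟨hvan, ?_⟩
  intro w hw
  have He := heq w hw
  rw [hvan w hw, Complex.exp_zero, mul_one] at He
  exact_mod_cast He
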